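/- Let U_{β:t} denote the β-th order statistic of t i.i.d. standard uniform random variables, so U_{β:t} ~ Beta(β, t − β + 1). Then for x ≥ β/(t+1), P(U_{β:t} ≥ x) ≤ exp(−(t+1)·ψ(x, β/(t+1))), and for x ≤ β/(t+1), P(U_{β:t} ≤ x) ≤ exp(−(t+1)·ψ(x, β/(t+1))), where ψ(x, p) = p·log(p/x) + (1−p)·log((1−p)/(1−x)). -/

import Mathlib

set_option maxHeartbeats 1000000


open MeasureTheory ProbabilityTheory ENNReal

/-- The `β`-th order statistic of the values `x 0, …, x (t-1)`:
the smallest `r` such that at least `β` of the values are `≤ r`. -/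
noncomputable def orderStat (t β : ℕ) (x : ℕ → ℝ) : ℝ :=
  sInf {r : ℝ | β ≤ ((Finset.range t).filter (fun i => x i ≤ r)).card}

private lemma orderStat_isLeast {t β : ℕ} (hβ : 1 ≤ β) (hβt : β ≤ t) (f : ℕ → ℝ) :
    IsLeast {r : ℝ | β ≤ ((Finset.range t).filter (fun i => f i ≤ r)).card}
      (orderStat t β f) := by
  classical
  set S := {r : ℝ | β ≤ ((Finset.range t).filter (fun i => f i ≤ r)).card} with hS
  have ht : 0 < t := lt_of_lt_of_le hβ hβt
  have hrange : (Finset.range t).Nonempty := ⟨0, Finset.mem_range.mpr ht⟩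
  have key : ∀ r ∈ S, ∃ y ∈ (Finset.range t).image f, y ∈ S ∧ y ≤ r := by
    intro r hr
    set G := (Finset.range t).filter (fun i => f i ≤ r) with hG
    have hrcard : β ≤ G.card := hr
    have hGne : G.Nonempty := Finset.card_pos.mp (lt_of_lt_of_le hβ hrcard)
    have hGimne : (G.image f).Nonempty := hGne.image f
    refine ⟨(G.image f).max' hGimne, ?_, ?_, ?_⟩
    · exact Finset.image_subset_image (Finset.filter_subset _ _) ((G.image f).max'_mem hGimne)
    · refine le_trans hrcard (Finset.card_le_card ?_)
      intro i hi
      exact Finset.mem_filter.mpr ⟨(Finset.mem_filter.mp hi).1,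
        Finset.le_max' _ _ (Finset.mem_image_of_mem f hi)⟩
    · exact Finset.max'_le _ _ _ (fun y hy => by
        obtain ⟨i, hi, rfl⟩ := Finset.mem_image.mp hy
        exact (Finset.mem_filter.mp hi).2)
  have hMS : ((Finset.range t).image f).max' (hrange.image f) ∈ S := by
    rw [hS, Set.mem_setOf_eq]
    have heq : (Finset.range t).filter
        (fun i => f i ≤ ((Finset.range t).image f).max' (hrange.image f)) = Finset.range t :=
      Finset.filter_true_of_mem (fun i hi => Finset.le_max' _ _ (Finset.mem_image_of_mem f hi))
    rw [heq, Finset.card_range]; exact hβt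
  set T := ((Finset.range t).image f).filter (fun y => y ∈ S) with hT
  have hTne : T.Nonempty := by
    obtain ⟨y, hy, hyS, _⟩ := key _ hMS
    exact ⟨y, Finset.mem_filter.mpr ⟨hy, hyS⟩⟩
  have hlb : ∀ r ∈ S, T.min' hTne ≤ r := by
    intro r hr
    obtain ⟨y, hy, hyS, hyr⟩ := key r hr
    exact le_trans (Finset.min'_le T y (Finset.mem_filter.mpr ⟨hy, hyS⟩)) hyr
  have hmin_mem : T.min' hTne ∈ S := (Finset.mem_filter.mp (T.min'_mem hTne)).2
  have heq : orderStat t β f = T.min' hTne :=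
    le_antisymm (csInf_le ⟨_, hlb⟩ hmin_mem) (le_csInf ⟨_, hMS⟩ hlb)
  rw [show orderStat t β f = sInf S from rfl] at heq ⊢
  rw [heq]
  exact ⟨hmin_mem, hlb⟩

private lemma lt_count_of_le_orderStat {t β : ℕ} (hβ : 1 ≤ β) (hβt : β ≤ t) (f : ℕ → ℝ) {x : ℝ}
    (h : x ≤ orderStat t β f) :
    ((Finset.range t).filter (fun i => f i < x)).card < β := by
  classical
  by_contra hcon
  push_neg at hcon
  set G := (Finset.range t).filter (fun i => f i < x) with hG
  have hGne : G.Nonempty := Finset.card_pos.mp (lt_of_lt_of_le hβ hcon)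
  have hGimne : (G.image f).Nonempty := hGne.image f
  set r := (G.image f).max' hGimne with hr
  have hrx : r < x := by
    apply Finset.max'_lt_iff _ hGimne |>.mpr
    intro y hy
    obtain ⟨i, hi, rfl⟩ := Finset.mem_image.mp hy
    exact (Finset.mem_filter.mp hi).2
  have hrS : β ≤ ((Finset.range t).filter (fun i => f i ≤ r)).card := by
    refine le_trans hcon (Finset.card_le_card ?_)
    intro i hi
    exact Finset.mem_filter.mpr ⟨(Finset.mem_filter.mp hi).1,
      Finset.le_max' _ _ (Finset.mem_image_of_mem f hi)⟩
  have := (orderStat_isLeast hβ hβt f).2 hrS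
  linarith

private lemma le_count_of_orderStat_le {t β : ℕ} (hβ : 1 ≤ β) (hβt : β ≤ t) (f : ℕ → ℝ) {x : ℝ}
    (h : orderStat t β f ≤ x) :
    β ≤ ((Finset.range t).filter (fun i => f i ≤ x)).card := by
  classical
  refine le_trans (orderStat_isLeast hβ hβt f).1 (Finset.card_le_card ?_)
  intro i hi
  exact Finset.mem_filter.mpr ⟨(Finset.mem_filter.mp hi).1,
    le_trans (Finset.mem_filter.mp hi).2 h⟩
open MeasureTheory ProbabilityTheory ENNReal

private lemma bernoulli_mgf {Ω : Type*} [MeasurableSpace Ω] (P : Measure Ω)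
    [IsProbabilityMeasure P] (A : Set Ω) (hA : MeasurableSet A) {p : ℝ} (lam : ℝ)
    (hp : P A = ENNReal.ofReal p) (hp0 : 0 ≤ p) :
    mgf (A.indicator (fun _ => (1:ℝ))) P lam = p * Real.exp lam + (1 - p) := by
  have hfun : ∀ ω, Real.exp (lam * A.indicator (fun _ => (1:ℝ)) ω)
      = A.indicator (fun _ => Real.exp lam - 1) ω + 1 := by
    intro ω
    by_cases hω : ω ∈ A <;> simp [Set.indicator_apply, hω]
  rw [mgf]
  simp only [hfun]
  rw [integral_add ((integrable_const (Real.exp lam - 1)).indicator hA) (integrable_const 1)]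
  rw [integral_indicator_const _ hA, integral_const, measureReal_def, measureReal_def, hp,
    ENNReal.toReal_ofReal hp0, measure_univ]
  simp; ring

private lemma chernoff_core {Ω : Type*} [MeasurableSpace Ω] (P : Measure Ω)
    [IsProbabilityMeasure P] (U : ℕ → Ω → ℝ) (hU : ∀ i, Measurable (U i))
    (hindep : iIndepFun U P)
    (B : Set ℝ) (hB : MeasurableSet B) {x : ℝ} (hx0 : 0 ≤ x)
    (hPB : ∀ i, P (U i ⁻¹' B) = ENNReal.ofReal x)
    (t : ℕ) (lam ε : ℝ) :
    ((0 ≤ lam → (P {ω | ε ≤ ∑ i ∈ Finset.range t, (B.indicator (fun _ => (1:ℝ)) (U i ω))}).toReal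
        ≤ Real.exp (-lam * ε) * (x * Real.exp lam + (1 - x)) ^ t) ∧
     (lam ≤ 0 → (P {ω | (∑ i ∈ Finset.range t, (B.indicator (fun _ => (1:ℝ)) (U i ω))) ≤ ε}).toReal
        ≤ Real.exp (-lam * ε) * (x * Real.exp lam + (1 - x)) ^ t)) := by
  classical
  set g : ℝ → ℝ := B.indicator (fun _ => (1:ℝ)) with hg
  have hgmeas : Measurable g := (measurable_const (a := (1:ℝ))).indicator hB
  set X : ℕ → Ω → ℝ := fun i ω => g (U i ω) with hX
  have hXmeas : ∀ i, Measurable (X i) := fun i => hgmeas.comp (hU i)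
  have hXindep : iIndepFun X P :=
    hindep.comp (fun _ => g) (fun _ => hgmeas)
  have hXind : ∀ i, X i = (U i ⁻¹' B).indicator (fun _ => (1:ℝ)) := by
    intro i; funext ω
    by_cases hω : U i ω ∈ B <;> simp [hX, hg, Set.indicator_apply, hω]
  have hmgf : mgf (∑ i ∈ Finset.range t, X i) P lam
      = (x * Real.exp lam + (1 - x)) ^ t := by
    have hmgfi : ∀ i ∈ Finset.range t, mgf (X i) P lam = x * Real.exp lam + (1 - x) := by
      intro i _
      rw [hXind i]
      exact bernoulli_mgf P _ ((hU i) hB) lam (hPB i) hx0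
    rw [hXindep.mgf_sum hXmeas, Finset.prod_congr rfl hmgfi, Finset.prod_const,
      Finset.card_range]
  have hXbound : ∀ i ω, 0 ≤ X i ω ∧ X i ω ≤ 1 := by
    intro i ω
    by_cases hω : U i ω ∈ B <;> simp [hX, hg, Set.indicator_apply, hω]
  set S : Ω → ℝ := fun ω => ∑ i ∈ Finset.range t, X i ω with hSdef
  have hSeq : S = ∑ i ∈ Finset.range t, X i := by
    funext ω; rw [Finset.sum_apply]
  have hmgfS : mgf S P lam = (x * Real.exp lam + (1 - x)) ^ t := by rw [hSeq, hmgf]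
  have hint : Integrable (fun ω => Real.exp (lam * S ω)) P := by
    refine Integrable.mono' (integrable_const (Real.exp (|lam| * t))) ?_ (ae_of_all _ ?_)
    · exact ((Finset.measurable_sum _ (fun i _ => hXmeas i)).const_mul lam).exp.aestronglyMeasurable
    · intro ω
      rw [Real.norm_eq_abs, abs_of_pos (Real.exp_pos _), Real.exp_le_exp]
      have hsum0 : 0 ≤ S ω := Finset.sum_nonneg (fun i _ => (hXbound i ω).1)
      have hsumt : S ω ≤ t := by
        calc S ω ≤ ∑ i ∈ Finset.range t, (1:ℝ) :=
              Finset.sum_le_sum (fun i _ => (hXbound i ω).2)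
          _ = t := by simp
      calc lam * S ω ≤ |lam| * S ω := mul_le_mul_of_nonneg_right (le_abs_self lam) hsum0
        _ ≤ |lam| * t := mul_le_mul_of_nonneg_left hsumt (abs_nonneg lam)
  have hsetg : ∀ ω, S ω = ∑ i ∈ Finset.range t, (B.indicator (fun _ => (1:ℝ)) (U i ω)) :=
    fun ω => rfl
  constructor
  · intro hlam
    have h := measure_ge_le_exp_mul_mgf (X := S) (μ := P) ε hlam hint
    rw [hmgfS] at h
    exact h
  · intro hlam
    have h := measure_le_le_exp_mul_mgf (X := S) (μ := P) ε hlam hint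
    rw [hmgfS] at h
    exact h

private lemma law_Iio {Ω : Type*} [MeasurableSpace Ω] (P : Measure Ω)
    (U : ℕ → Ω → ℝ) (hU : ∀ i, Measurable (U i))
    (hlaw : ∀ i, P.map (U i) = volume.restrict (Set.Icc (0:ℝ) 1))
    {x : ℝ} (hx0 : 0 < x) (hx1 : x < 1) (i : ℕ) :
    P (U i ⁻¹' Set.Iio x) = ENNReal.ofReal x := by
  rw [← Measure.map_apply (hU i) measurableSet_Iio, hlaw i,
    Measure.restrict_apply measurableSet_Iio]
  have h : Set.Iio x ∩ Set.Icc 0 1 = Set.Ico 0 x :=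
    Set.ext fun y => ⟨fun h => ⟨h.2.1, h.1⟩, fun h => ⟨h.2, h.1, by linarith [h.2]⟩⟩
  rw [h, Real.volume_Ico]; simp

private lemma law_Iic {Ω : Type*} [MeasurableSpace Ω] (P : Measure Ω)
    (U : ℕ → Ω → ℝ) (hU : ∀ i, Measurable (U i))
    (hlaw : ∀ i, P.map (U i) = volume.restrict (Set.Icc (0:ℝ) 1))
    {x : ℝ} (hx0 : 0 < x) (hx1 : x < 1) (i : ℕ) :
    P (U i ⁻¹' Set.Iic x) = ENNReal.ofReal x := by
  rw [← Measure.map_apply (hU i) measurableSet_Iic, hlaw i,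
    Measure.restrict_apply measurableSet_Iic]
  have h : Set.Iic x ∩ Set.Icc 0 1 = Set.Icc 0 x :=
    Set.ext fun y => ⟨fun h => ⟨h.2.1, h.1⟩, fun h => ⟨h.2, h.1, by linarith [h.2]⟩⟩
  rw [h, Real.volume_Icc]; simp

/-- The Kullback–Leibler divergence `ψ(x, p)` between Bernoulli(p) and
Bernoulli(x). -/
noncomputable def bernKL (x p : ℝ) : ℝ :=
  p * Real.log (p / x) + (1 - p) * Real.log ((1 - p) / (1 - x))

set_option maxHeartbeats 2000000 in
/-- Dümbgen's Beta tail bounds.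
Let `U_{β:t}` be the `β`-th order statistic of `t` i.i.d. standard uniform
random variables (so `U_{β:t} ~ Beta(β, t − β + 1)`).  Then for
`x ≥ β/(t+1)` the upper tail `P(U_{β:t} ≥ x)` is at most
`exp(−(t+1)ψ(x, β/(t+1)))`, and for `x ≤ β/(t+1)` the lower tail
`P(U_{β:t} ≤ x)` satisfies the same bound. -/
theorem dumbgen_beta_tail_bounds
    {Ω : Type*} [MeasurableSpace Ω] (P : Measure Ω) [IsProbabilityMeasure P]
    (U : ℕ → Ω → ℝ) (hU : ∀ i, Measurable (U i))
    (hlaw : ∀ i, P.map (U i) = volume.restrict (Set.Icc (0:ℝ) 1))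
    (hindep : iIndepFun U P)
    (t β : ℕ) (hβ : 1 ≤ β) (hβt : β ≤ t)
    (x : ℝ) (hx : x ∈ Set.Ioo (0:ℝ) 1) :
    ((β : ℝ) / (t + 1) ≤ x →
      P {ω | x ≤ orderStat t β (fun i => U i ω)} ≤
        ENNReal.ofReal (Real.exp (-(t + 1) * bernKL x ((β : ℝ) / (t + 1))))) ∧
    (x ≤ (β : ℝ) / (t + 1) →
      P {ω | orderStat t β (fun i => U i ω) ≤ x} ≤
        ENNReal.ofReal (Real.exp (-(t + 1) * bernKL x ((β : ℝ) / (t + 1))))) := by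
  classical
  obtain ⟨hx0, hx1⟩ := hx
  have h1x : (0:ℝ) < 1 - x := by linarith
  have ht1 : (0:ℝ) < (t:ℝ) + 1 := by positivity
  set m : ℝ := (β : ℝ) / ((t:ℝ) + 1) with hmdef
  have hm0 : 0 < m := div_pos (by exact_mod_cast hβ) ht1
  have hm1 : m < 1 := by
    rw [hmdef, div_lt_one ht1]
    have : (β:ℝ) ≤ (t:ℝ) := by exact_mod_cast hβt
    linarith
  have hβm : (β:ℝ) = ((t:ℝ)+1) * m := by
    rw [hmdef, mul_comm, div_mul_cancel₀ _ (ne_of_gt ht1)]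
  clear_value m
  clear hmdef
  have h1m : (0:ℝ) < 1 - m := by linarith
  set lam : ℝ := Real.log (m * (1-x) / (x * (1-m))) with hlamdef
  clear_value lam
  have hargpos : 0 < m * (1-x) / (x * (1-m)) :=
    div_pos (mul_pos hm0 h1x) (mul_pos hx0 h1m)
  have hexp : Real.exp lam = m * (1-x) / (x * (1-m)) := by
    rw [hlamdef]; exact Real.exp_log hargpos
  have hM : x * Real.exp lam + (1-x) = (1-x)/(1-m) := by
    rw [hexp]
    field_simp
    ring
  have hMpos : 0 < (1-x)/(1-m) := div_pos h1x h1m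
  have hψ : bernKL x m
      = m*(Real.log m - Real.log x) + (1-m)*(Real.log (1-m) - Real.log (1-x)) := by
    rw [bernKL, Real.log_div (ne_of_gt hm0) (ne_of_gt hx0),
      Real.log_div (ne_of_gt h1m) (ne_of_gt h1x)]
  have hlam_eq : lam = Real.log m + Real.log (1-x) - (Real.log x + Real.log (1-m)) := by
    rw [hlamdef, Real.log_div (ne_of_gt (mul_pos hm0 h1x)) (ne_of_gt (mul_pos hx0 h1m)),
      Real.log_mul (ne_of_gt hm0) (ne_of_gt h1x),
      Real.log_mul (ne_of_gt hx0) (ne_of_gt h1m)]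
  have hlogM : Real.log ((1-x)/(1-m)) = Real.log (1-x) - Real.log (1-m) :=
    Real.log_div (ne_of_gt h1x) (ne_of_gt h1m)
  have hpow : ((1-x)/(1-m))^(t+1) = Real.exp (((t:ℝ)+1) * Real.log ((1-x)/(1-m))) := by
    rw [← Real.rpow_natCast ((1-x)/(1-m)) (t+1), Real.rpow_def_of_pos hMpos]
    congr 1
    push_cast
    ring
  have key : Real.exp (-lam * (β:ℝ)) * ((1-x)/(1-m))^(t+1)
      = Real.exp (-((t:ℝ)+1) * bernKL x m) := by
    rw [hpow, ← Real.exp_add]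
    congr 1
    rw [hψ, hlam_eq, hlogM, hβm]
    ring
  constructor
  · -- upper tail : m ≤ x, lam ≤ 0
    intro hmx
    have hlam_le : lam ≤ 0 := by
      rw [hlamdef]
      apply Real.log_nonpos (le_of_lt hargpos)
      rw [div_le_one (mul_pos hx0 h1m)]
      nlinarith
    have hexp_le_one : Real.exp lam ≤ 1 := by
      have h := Real.exp_le_exp.mpr hlam_le
      rwa [Real.exp_zero] at h
    have hsub : {ω | x ≤ orderStat t β (fun i => U i ω)} ⊆
        {ω | (∑ i ∈ Finset.range t, ((Set.Iio x).indicator (fun _ => (1:ℝ)) (U i ω))) ≤ (β:ℝ) - 1} := by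
      intro ω hω
      have hcard := lt_count_of_le_orderStat hβ hβt (fun i => U i ω) hω
      have hcount : (∑ i ∈ Finset.range t, ((Set.Iio x).indicator (fun _ => (1:ℝ)) (U i ω)))
          = (((Finset.range t).filter (fun i => U i ω < x)).card : ℝ) := by
        rw [← Finset.sum_boole]
        exact Finset.sum_congr rfl (fun i _ => by
          by_cases h : U i ω < x <;> simp [Set.indicator_apply, Set.mem_Iio, h])
      rw [Set.mem_setOf_eq, hcount]
      have hc : (((Finset.range t).filter (fun i => U i ω < x)).card : ℝ) + 1 ≤ (β:ℝ) := by
        exact_mod_cast Nat.succ_le_of_lt hcard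
      linarith
    have hcher := (chernoff_core P U hU hindep (Set.Iio x) measurableSet_Iio (le_of_lt hx0)
      (law_Iio P U hU hlaw hx0 hx1) t lam ((β:ℝ) - 1)).2 hlam_le
    rw [hM] at hcher
    have hineq : Real.exp (-lam * ((β:ℝ) - 1)) * ((1-x)/(1-m))^t
        ≤ Real.exp (-((t:ℝ)+1) * bernKL x m) := by
      rw [← key]
      have h2 : Real.exp lam ≤ (1-x)/(1-m) := by rw [← hM]; nlinarith
      have h3 : (0:ℝ) ≤ ((1-x)/(1-m))^t := le_of_lt (pow_pos hMpos t)
      calc Real.exp (-lam * ((β:ℝ) - 1)) * ((1-x)/(1-m))^t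
          = Real.exp (-lam * (β:ℝ)) * (Real.exp lam * ((1-x)/(1-m))^t) := by
            rw [show -lam * ((β:ℝ) - 1) = -lam * (β:ℝ) + lam by ring, Real.exp_add]
            ring
        _ ≤ Real.exp (-lam * (β:ℝ)) * (((1-x)/(1-m)) * ((1-x)/(1-m))^t) :=
            mul_le_mul_of_nonneg_left (mul_le_mul_of_nonneg_right h2 h3)
              (le_of_lt (Real.exp_pos _))
        _ = Real.exp (-lam * (β:ℝ)) * ((1-x)/(1-m))^(t+1) := by rw [pow_succ]; ring
    calc P {ω | x ≤ orderStat t β (fun i => U i ω)}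
        ≤ P {ω | (∑ i ∈ Finset.range t, ((Set.Iio x).indicator (fun _ => (1:ℝ)) (U i ω))) ≤ (β:ℝ) - 1} :=
          measure_mono hsub
      _ = ENNReal.ofReal ((P {ω | (∑ i ∈ Finset.range t, ((Set.Iio x).indicator (fun _ => (1:ℝ)) (U i ω))) ≤ (β:ℝ) - 1}).toReal) :=
          (ENNReal.ofReal_toReal (measure_ne_top P _)).symm
      _ ≤ ENNReal.ofReal (Real.exp (-((t:ℝ)+1) * bernKL x m)) :=
          ENNReal.ofReal_le_ofReal (le_trans hcher hineq)
  · -- lower tail : x ≤ m, lam ≥ 0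
    intro hxm
    have hlam_ge : 0 ≤ lam := by
      rw [hlamdef]
      apply Real.log_nonneg
      rw [le_div_iff₀ (mul_pos hx0 h1m)]
      nlinarith
    have hone_le_exp : 1 ≤ Real.exp lam := by
      have h := Real.exp_le_exp.mpr hlam_ge
      rwa [Real.exp_zero] at h
    have hsub : {ω | orderStat t β (fun i => U i ω) ≤ x} ⊆
        {ω | (β:ℝ) ≤ ∑ i ∈ Finset.range t, ((Set.Iic x).indicator (fun _ => (1:ℝ)) (U i ω))} := by
      intro ω hω
      have hcard := le_count_of_orderStat_le hβ hβt (fun i => U i ω) hω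
      have hcount : (∑ i ∈ Finset.range t, ((Set.Iic x).indicator (fun _ => (1:ℝ)) (U i ω)))
          = (((Finset.range t).filter (fun i => U i ω ≤ x)).card : ℝ) := by
        rw [← Finset.sum_boole]
        exact Finset.sum_congr rfl (fun i _ => by
          by_cases h : U i ω ≤ x <;> simp [Set.indicator_apply, Set.mem_Iic, h])
      rw [Set.mem_setOf_eq, hcount]
      exact_mod_cast hcard
    have hcher := (chernoff_core P U hU hindep (Set.Iic x) measurableSet_Iic (le_of_lt hx0)
      (law_Iic P U hU hlaw hx0 hx1) t lam ((β:ℝ))).1 hlam_ge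
    rw [hM] at hcher
    have hineq : Real.exp (-lam * (β:ℝ)) * ((1-x)/(1-m))^t
        ≤ Real.exp (-((t:ℝ)+1) * bernKL x m) := by
      rw [← key]
      have hone_le_M : 1 ≤ (1-x)/(1-m) := by rw [← hM]; nlinarith
      have h3 : (0:ℝ) ≤ ((1-x)/(1-m))^t := le_of_lt (pow_pos hMpos t)
      have : ((1-x)/(1-m))^t ≤ ((1-x)/(1-m))^(t+1) := by
        rw [pow_succ]
        exact le_mul_of_one_le_right h3 hone_le_M
      exact mul_le_mul_of_nonneg_left this (le_of_lt (Real.exp_pos _))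
    calc P {ω | orderStat t β (fun i => U i ω) ≤ x}
        ≤ P {ω | (β:ℝ) ≤ ∑ i ∈ Finset.range t, ((Set.Iic x).indicator (fun _ => (1:ℝ)) (U i ω))} :=
          measure_mono hsub
      _ = ENNReal.ofReal ((P {ω | (β:ℝ) ≤ ∑ i ∈ Finset.range t, ((Set.Iic x).indicator (fun _ => (1:ℝ)) (U i ω))}).toReal) :=
          (ENNReal.ofReal_toReal (measure_ne_top P _)).symm
      _ ≤ ENNReal.ofReal (Real.exp (-((t:ℝ)+1) * bernKL x m)) :=
          ENNReal.ofReal_le_ofReal (le_trans hcher hineq)
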